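/- Let d be a strictly positive probability distribution on {1,...,n} with n ≥ 3 (n even suffices: the claim holds for all n ≥ 3) whose components in non-increasing order are NOT of the form (d₀,...,d₀,d₁). Then there exist probability distributions p, q on {1,...,n} such that q = Mp for some d-stochastic matrix M, but q cannot be obtained from p by any convex combination of finite products of d-swaps. Concretely: if d₁ (the largest component) satisfies d₁ ≥ d₂ + d₃ (for the second and third largest distinct-or-equal smaller components d₂ ≥ d₃ with d₂ < d₁), one may take q = (1,0,...,0) and p = (0, a, b, 0, ..., 0) with d₃/d₁ ≤ b ≤ (d₁-d₂)/d₁ and a = 1 - b; then q is d-majorized by p but any product of d-swaps applied to p has support of size at least 2. -/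

import Mathlib

open Matrix BigOperators

/-- The `d`-swap `P^d(i,j)`: the identity except on the pair `{i,j}`, where it has
entries `(i,i) = 1 - d j / d i`, `(i,j) = 1`, `(j,i) = d j / d i`, `(j,j) = 0`. -/
noncomputable def Pswap {n : ℕ} (d : Fin n → ℝ) (i j : Fin n) : Matrix (Fin n) (Fin n) ℝ :=
  Matrix.of fun k l =>
    if k = i ∧ l = i then 1 - d j / d i
    else if k = i ∧ l = j then 1
    else if k = j ∧ l = i then d j / d i
    else if k = j ∧ l = j then 0
    else if k = l then 1 else 0

lemma Pswap_mulVec {n : ℕ} (d : Fin n → ℝ) (i j : Fin n) (hij : i ≠ j) (v : Fin n → ℝ) :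
    (Pswap d i j).mulVec v = fun k =>
      if k = i then (1 - d j / d i) * v i + v j
      else if k = j then d j / d i * v i else v k := by
  funext k
  simp only [Matrix.mulVec, dotProduct, Pswap, Matrix.of_apply]
  by_cases hki : k = i
  · rw [Finset.sum_congr rfl (g := fun l => (if l = i then (1 - d j / d i) * v i else 0)
        + (if l = j then v j else 0)) (fun l _ => by
      by_cases h1 : l = i
      · subst h1; simp [hki, hij, Ne.symm hij]
      · by_cases h2 : l = j
        · subst h2; simp [hki, hij, Ne.symm hij, h1]
        · simp [hki, h1, h2, show ¬ i = l from fun h => h1 h.symm])]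
    rw [Finset.sum_add_distrib, Finset.sum_ite_eq' Finset.univ i, Finset.sum_ite_eq' Finset.univ j]
    simp [hki]
  · by_cases hkj : k = j
    · rw [Finset.sum_congr rfl (g := fun l => (if l = i then d j / d i * v i else 0)) (fun l _ => by
        by_cases h1 : l = i
        · subst h1; simp [hki, hkj, Ne.symm hij]
        · by_cases h2 : l = j
          · subst h2; simp [hki, hkj, h1]
          · simp [hki, hkj, h1, h2, show ¬ j = l from fun h => h2 h.symm])]
      rw [Finset.sum_ite_eq' Finset.univ i]
      simp [hki, hkj, Ne.symm hij]
    · rw [Finset.sum_congr rfl (g := fun l => (if l = k then v k else 0)) (fun l _ => by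
        by_cases h1 : l = k
        · subst h1; simp [hki, hkj]
        · simp [hki, hkj, h1, show ¬ k = l from fun h => h1 h.symm])]
      rw [Finset.sum_ite_eq' Finset.univ k]
      simp [hki, hkj]

/-- the number of indices in the support of `v` whose `d`-value is at least `t` -/
noncomputable def supC {n : ℕ} (d : Fin n → ℝ) (t : ℝ) (v : Fin n → ℝ) : ℕ :=
  (Finset.univ.filter fun i => t ≤ d i ∧ 0 < v i).card

lemma supC_step {n : ℕ} (d : Fin n → ℝ) (hpos : ∀ i, 0 < d i) (i j : Fin n) (hij : i ≠ j)
    (hd : d j ≤ d i) (v : Fin n → ℝ) (hv : ∀ k, 0 ≤ v k) (t : ℝ)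
    (w : Fin n → ℝ)
    (hw : w = fun k => if k = i then (1 - d j / d i) * v i + v j
      else if k = j then d j / d i * v i else v k) :
    (∀ k, 0 ≤ w k) ∧ supC d t v ≤ supC d t w := by
  subst hw
  have hr0 : 0 < d j / d i := div_pos (hpos j) (hpos i)
  have hr1 : d j / d i ≤ 1 := by rw [div_le_one (hpos i)]; exact hd
  constructor
  · intro k
    dsimp only
    split_ifs with h1 h2
    · nlinarith [hv i, hv j]
    · exact mul_nonneg hr0.le (hv i)
    · exact hv k
  · apply Finset.card_le_card_of_injOn
      (fun l => if v i = 0 ∨ (d j = d i ∧ v j = 0) then Equiv.swap i j l else l)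
    · intro l hl
      simp only [Finset.coe_filter, Set.mem_setOf_eq, Finset.mem_filter, Finset.mem_univ, true_and] at hl ⊢
      obtain ⟨htl, hvl⟩ := hl
      by_cases C : v i = 0 ∨ (d j = d i ∧ v j = 0)
      · simp only [if_pos C]
        rcases eq_or_ne l i with hli | hli
        · have hC : d j = d i ∧ v j = 0 := by
            rcases C with h | h
            · exact absurd h (ne_of_gt (hli ▸ hvl))
            · exact h
          rw [hli, Equiv.swap_apply_left]
          refine ⟨hC.1 ▸ (hli ▸ htl), ?_⟩
          rw [if_neg (Ne.symm hij), if_pos rfl]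
          exact mul_pos hr0 (hli ▸ hvl)
        · rcases eq_or_ne l j with hlj | hlj
          · have hvi : v i = 0 := by
              rcases C with h | h
              · exact h
              · exact absurd h.2 (ne_of_gt (hlj ▸ hvl))
            rw [hlj, Equiv.swap_apply_right]
            refine ⟨le_trans (hlj ▸ htl) hd, ?_⟩
            rw [if_pos rfl, hvi, mul_zero, zero_add]
            exact hlj ▸ hvl
          · rw [Equiv.swap_apply_of_ne_of_ne hli hlj, if_neg hli, if_neg hlj]
            exact ⟨htl, hvl⟩
      · simp only [if_neg C]
        push_neg at C
        obtain ⟨hvi, hC2⟩ := C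
        have hvi' : 0 < v i := lt_of_le_of_ne (hv i) (Ne.symm hvi)
        rcases eq_or_ne l i with hli | hli
        · rw [hli, if_pos rfl]
          refine ⟨hli ▸ htl, ?_⟩
          rcases eq_or_ne (d j) (d i) with h | h
          · have hvj : 0 < v j := lt_of_le_of_ne (hv j) (Ne.symm (hC2 h))
            nlinarith [hv i]
          · have h1 : d j / d i < 1 := by
              rw [div_lt_one (hpos i)]; exact lt_of_le_of_ne hd h
            nlinarith [hv j]
        · rcases eq_or_ne l j with hlj | hlj
          · rw [hlj, if_neg (Ne.symm hij), if_pos rfl]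
            exact ⟨hlj ▸ htl, mul_pos hr0 hvi'⟩
          · rw [if_neg hli, if_neg hlj]
            exact ⟨htl, hvl⟩
    · intro a _ b _ hab
      dsimp only at hab
      by_cases C : v i = 0 ∨ (d j = d i ∧ v j = 0)
      · rw [if_pos C, if_pos C] at hab
        exact (Equiv.swap i j).injective hab
      · rw [if_neg C, if_neg C] at hab
        exact hab

set_option maxHeartbeats 1000000 in
lemma supC_prod {n : ℕ} (d : Fin n → ℝ) (hpos : ∀ i, 0 < d i)
    (hmono : ∀ i j : Fin n, i ≤ j → d j ≤ d i)
    (Ls : List (Fin n × Fin n)) (hLs : ∀ pr ∈ Ls, pr.1 < pr.2)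
    (p : Fin n → ℝ) (hp : ∀ k, 0 ≤ p k) (t : ℝ) :
    (∀ k, 0 ≤ ((Ls.map fun pr => Pswap d pr.1 pr.2).prod.mulVec p) k) ∧
      supC d t p ≤ supC d t ((Ls.map fun pr => Pswap d pr.1 pr.2).prod.mulVec p) := by
  induction Ls with
  | nil =>
    simp only [List.map_nil, List.prod_nil, Matrix.one_mulVec]
    exact ⟨hp, le_rfl⟩
  | cons hd' tl ih =>
    have h1 := ih (fun pr h => hLs pr (List.mem_cons_of_mem _ h))
    have hlt : hd'.1 < hd'.2 := hLs hd' List.mem_cons_self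
    rw [List.map_cons, List.prod_cons, ← Matrix.mulVec_mulVec]
    have hstep := supC_step d hpos hd'.1 hd'.2 (Fin.ne_of_lt hlt) (hmono _ _ hlt.le)
      ((tl.map fun pr => Pswap d pr.1 pr.2).prod.mulVec p) h1.1 t
      _ (Pswap_mulVec d hd'.1 hd'.2 (Fin.ne_of_lt hlt) _)
    exact ⟨hstep.1, le_trans h1.2 hstep.2⟩

lemma sum_mulVec' {m n : ℕ} (A : Fin m → Matrix (Fin n) (Fin n) ℝ) (p : Fin n → ℝ) :
    (∑ k, A k).mulVec p = ∑ k, (A k).mulVec p := by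
  funext i
  simp only [Matrix.mulVec, dotProduct, Finset.sum_apply, Matrix.sum_apply,
    Finset.sum_mul]
  rw [Finset.sum_comm]

lemma noETO {n : ℕ} (d : Fin n → ℝ) (hpos : ∀ i, 0 < d i)
    (hmono : ∀ i j : Fin n, i ≤ j → d j ≤ d i)
    (p q : Fin n → ℝ) (hp : ∀ i, 0 ≤ p i) (t : ℝ)
    (hlt : supC d t q < supC d t p) :
    ¬ ∃ (m : ℕ) (c : Fin m → ℝ) (Ls : Fin m → List (Fin n × Fin n)),
        (∀ k, 0 ≤ c k) ∧ (∑ k, c k = 1) ∧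
        (∀ k, ∀ pr ∈ Ls k, pr.1 < pr.2) ∧
        q = (∑ k, c k • ((Ls k).map fun pr => Pswap d pr.1 pr.2).prod).mulVec p := by
  rintro ⟨m, c, Ls, hc0, hc1, hprs, hqeq⟩
  obtain ⟨k, -, hk⟩ := Finset.exists_ne_zero_of_sum_ne_zero
    (show ∑ k, c k ≠ 0 by rw [hc1]; exact one_ne_zero)
  set v : Fin m → Fin n → ℝ :=
    fun k' => ((Ls k').map fun pr => Pswap d pr.1 pr.2).prod.mulVec p with hvdef
  have hv : ∀ k', (∀ i, 0 ≤ v k' i) ∧ supC d t p ≤ supC d t (v k') :=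
    fun k' => supC_prod d hpos hmono (Ls k') (hprs k') p hp t
  have hq_eq : ∀ i, q i = ∑ k', c k' * v k' i := by
    intro i
    rw [hqeq, sum_mulVec']
    rw [Finset.sum_apply]
    refine Finset.sum_congr rfl fun k' _ => ?_
    rw [Matrix.smul_mulVec, Pi.smul_apply, smul_eq_mul]
  have hck : 0 < c k := lt_of_le_of_ne (hc0 k) (Ne.symm hk)
  have key : ∀ i, 0 < v k i → 0 < q i := by
    intro i hvi
    rw [hq_eq i]
    have hle : c k * v k i ≤ ∑ k', c k' * v k' i :=
      Finset.single_le_sum (fun k' _ => mul_nonneg (hc0 k') ((hv k').1 i)) (Finset.mem_univ k)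
    nlinarith
  have h2 : supC d t (v k) ≤ supC d t q := by
    apply Finset.card_le_card
    intro i hi
    simp only [Finset.mem_filter, Finset.mem_univ, true_and] at hi ⊢
    exact ⟨hi.1, key i hi.2⟩
  have := (hv k).2
  omega

lemma construct {n : ℕ} (d : Fin n → ℝ) (hpos : ∀ i, 0 < d i) (hsum : ∑ i, d i = 1)
    (T : Finset (Fin n)) (p q : Fin n → ℝ)
    (hpT : ∀ l, l ∉ T → p l = 0) (hps : ∑ i, p i = 1)
    (hq0 : ∀ i, 0 ≤ q i) (hqs : ∑ i, q i = 1)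
    (hDT : ∑ l ∈ T, d l < 1)
    (hdq : ∀ i, (∑ l ∈ T, d l) * q i ≤ d i) :
    ∃ M : Matrix (Fin n) (Fin n) ℝ,
      (∀ i j, 0 ≤ M i j) ∧ (∀ j, ∑ i, M i j = 1) ∧ M.mulVec d = d ∧ q = M.mulVec p := by
  set DT := ∑ l ∈ T, d l with hDTdef
  have h1 : (0:ℝ) < 1 - DT := by linarith
  have hcompl : ∑ l ∈ Tᶜ, d l = 1 - DT := by
    have h := Finset.sum_add_sum_compl T d
    rw [hsum] at h
    linarith
  refine ⟨Matrix.of fun i l => if l ∈ T then q i else (d i - DT * q i) / (1 - DT),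
    ?_, ?_, ?_, ?_⟩
  · intro i l
    dsimp only [Matrix.of_apply]
    split_ifs with h
    · exact hq0 i
    · exact div_nonneg (by linarith [hdq i]) h1.le
  · intro l
    dsimp only [Matrix.of_apply]
    split_ifs with h
    · exact hqs
    · rw [← Finset.sum_div, Finset.sum_sub_distrib, ← Finset.mul_sum, hsum, hqs, mul_one]
      field_simp
  · funext i
    simp only [Matrix.mulVec, dotProduct, Matrix.of_apply]
    rw [← Finset.sum_add_sum_compl T]
    have hA : ∑ l ∈ T, (if l ∈ T then q i else (d i - DT * q i) / (1 - DT)) * d l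
        = q i * DT := by
      refine (Finset.sum_congr rfl fun l hl => by rw [if_pos hl]).trans ?_
      rw [← Finset.mul_sum]
    have hB : ∑ l ∈ Tᶜ, (if l ∈ T then q i else (d i - DT * q i) / (1 - DT)) * d l
        = d i - DT * q i := by
      refine (Finset.sum_congr rfl fun l hl =>
        by rw [if_neg (Finset.mem_compl.mp hl)]).trans ?_
      rw [← Finset.mul_sum, hcompl]
      field_simp
    rw [hA, hB]
    ring
  · funext i
    simp only [Matrix.mulVec, dotProduct, Matrix.of_apply]
    rw [← Finset.sum_add_sum_compl T]
    have hTp : ∑ l ∈ T, p l = 1 := by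
      have h2 : ∑ l ∈ Tᶜ, p l = 0 :=
        Finset.sum_eq_zero fun l hl => hpT l (Finset.mem_compl.mp hl)
      have h := Finset.sum_add_sum_compl T p
      rw [hps] at h
      linarith
    have hA : ∑ l ∈ T, (if l ∈ T then q i else (d i - DT * q i) / (1 - DT)) * p l
        = q i := by
      refine (Finset.sum_congr rfl fun l hl => by rw [if_pos hl]).trans ?_
      rw [← Finset.mul_sum, hTp, mul_one]
    have hB : ∑ l ∈ Tᶜ, (if l ∈ T then q i else (d i - DT * q i) / (1 - DT)) * p l
        = 0 := by
      refine Finset.sum_eq_zero fun l hl => ?_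
      rw [hpT l (Finset.mem_compl.mp hl), mul_zero]
    rw [hA, hB, add_zero]
theorem stmt9 (n : ℕ) (hn : 3 ≤ n) (d : Fin n → ℝ)
    (hpos : ∀ i, 0 < d i) (hsum : ∑ i, d i = 1)
    (hmono : ∀ i j : Fin n, i ≤ j → d j ≤ d i)
    (hne : d ⟨n - 2, by omega⟩ < d ⟨0, by omega⟩) :
    ∃ p q : Fin n → ℝ,
      (∀ i, 0 ≤ p i) ∧ ∑ i, p i = 1 ∧ (∀ i, 0 ≤ q i) ∧ ∑ i, q i = 1 ∧
      (∃ M : Matrix (Fin n) (Fin n) ℝ,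
        (∀ i j, 0 ≤ M i j) ∧ (∀ j, ∑ i, M i j = 1) ∧ M.mulVec d = d ∧
        q = M.mulVec p) ∧
      ¬ ∃ (m : ℕ) (c : Fin m → ℝ) (Ls : Fin m → List (Fin n × Fin n)),
          (∀ k, 0 ≤ c k) ∧ (∑ k, c k = 1) ∧
          (∀ k, ∀ pr ∈ Ls k, pr.1 < pr.2) ∧
          q = (∑ k, c k • ((Ls k).map fun pr => Pswap d pr.1 pr.2).prod).mulVec p := by
  have h0n : 0 < n := by omega
  set i0 : Fin n := ⟨0, by omega⟩ with hi0
  set i1 : Fin n := ⟨n - 2, by omega⟩ with hi1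
  set i2 : Fin n := ⟨n - 1, by omega⟩ with hi2
  have hv0 : (i0 : ℕ) = 0 := rfl
  have hv1 : (i1 : ℕ) = n - 2 := rfl
  have hv2 : (i2 : ℕ) = n - 1 := rfl
  have hne' : d i1 < d i0 := hne
  have hne12 : i1 ≠ i2 := by
    intro h
    have := congrArg Fin.val h
    rw [hv1, hv2] at this
    omega
  have hne20 : i2 ≠ i0 := by
    intro h
    have := congrArg Fin.val h
    rw [hv2, hv0] at this
    omega
  have hDTerase : d i0 + ∑ l ∈ Finset.univ.erase i0, d l = 1 := by
    rw [Finset.add_sum_erase Finset.univ d (Finset.mem_univ i0), hsum]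
  have hd0lt1 : d i0 < 1 := by
    have h2 : d i2 ≤ ∑ l ∈ Finset.univ.erase i0, d l :=
      Finset.single_le_sum (fun l _ => (hpos l).le)
        (Finset.mem_erase.mpr ⟨hne20, Finset.mem_univ _⟩)
    have := hpos i2
    linarith
  by_cases hcase : d i1 + d i2 ≤ d i0
  · -- Case A : use support-size invariant (t = 0)
    have hn1 : (0:ℝ) < (n:ℝ) - 1 := by
      have : (3:ℝ) ≤ (n:ℝ) := by exact_mod_cast hn
      linarith
    set S : Finset (Fin n) := Finset.Iio i1 with hS
    set DS : ℝ := ∑ l ∈ S, d l with hDS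
    have hcomplS : Sᶜ = {i1, i2} := by
      ext i
      simp only [hS, Finset.mem_compl, Finset.mem_Iio, not_lt, Finset.mem_insert,
        Finset.mem_singleton, Fin.le_def, Fin.ext_iff, hv1, hv2]
      have := i.isLt
      omega
    have hDSeq : DS = 1 - (d i1 + d i2) := by
      have h := Finset.sum_add_sum_compl S d
      rw [hsum, hcomplS, Finset.sum_pair hne12] at h
      linarith
    have hDSpos : 0 < DS := by rw [hDSeq]; linarith
    obtain ⟨p, hp⟩ : ∃ p : Fin n → ℝ, p = fun i => if i = i0 then 0 else ((n:ℝ) - 1)⁻¹ :=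
      ⟨_, rfl⟩
    obtain ⟨q, hq⟩ : ∃ q : Fin n → ℝ, q = fun i => if i ∈ S then d i / DS else 0 :=
      ⟨_, rfl⟩
    have hp0 : ∀ i, 0 ≤ p i := by
      intro i
      rw [hp]
      dsimp only
      split_ifs
      · exact le_rfl
      · positivity
    have hps : ∑ i, p i = 1 := by
      have h := Finset.add_sum_erase Finset.univ p (Finset.mem_univ i0)
      have h2 : ∑ l ∈ Finset.univ.erase i0, p l
          = ∑ l ∈ Finset.univ.erase i0, ((n:ℝ) - 1)⁻¹ :=
        Finset.sum_congr rfl fun l hl => by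
          rw [hp]; exact if_neg (Finset.mem_erase.mp hl).1
      rw [h2] at h
      rw [Finset.sum_const, Finset.card_erase_of_mem (Finset.mem_univ i0),
        Finset.card_univ, Fintype.card_fin, nsmul_eq_mul] at h
      have hcast : ((n - 1 : ℕ) : ℝ) = (n:ℝ) - 1 := by
        rw [Nat.cast_sub (by omega)]
        norm_num
      rw [hcast] at h
      have hpi0 : p i0 = 0 := by rw [hp]; exact if_pos rfl
      rw [hpi0, zero_add, mul_inv_cancel₀ hn1.ne'] at h
      exact h.symm
    have hq0 : ∀ i, 0 ≤ q i := by
      intro i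
      rw [hq]
      dsimp only
      split_ifs
      · exact div_nonneg (hpos i).le hDSpos.le
      · exact le_rfl
    have hqs : ∑ i, q i = 1 := by
      rw [hq]
      rw [Finset.sum_ite_mem, Finset.univ_inter, ← Finset.sum_div, ← hDS,
        div_self hDSpos.ne']
    refine ⟨p, q, hp0, hps, hq0, hqs, ?_, ?_⟩
    · apply construct d hpos hsum (Finset.univ.erase i0) p q
      · intro l hl
        rw [hp]
        dsimp only
        rw [if_pos]
        simpa using hl
      · exact hps
      · exact hq0
      · exact hqs
      · have : ∑ l ∈ Finset.univ.erase i0, d l = 1 - d i0 := by linarith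
        rw [this]
        linarith [hpos i0]
      · intro i
        have hDTeq : ∑ l ∈ Finset.univ.erase i0, d l = 1 - d i0 := by linarith
        rw [hDTeq, hq]
        dsimp only
        split_ifs with hiS
        · calc (1 - d i0) * (d i / DS) ≤ DS * (d i / DS) := by
                apply mul_le_mul_of_nonneg_right _ (div_nonneg (hpos i).le hDSpos.le)
                rw [hDSeq]; linarith
            _ = d i := by field_simp
        · rw [mul_zero]; exact (hpos i).le
    · apply noETO d hpos hmono p q hp0 0
      have hqcard : supC d 0 q ≤ n - 2 := by
        have hsub : (Finset.univ.filter fun i => 0 ≤ d i ∧ 0 < q i) ⊆ S := by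
          intro i hi
          obtain ⟨-, hqi⟩ := (Finset.mem_filter.mp hi).2
          by_contra hiS
          rw [hq] at hqi
          dsimp only at hqi
          rw [if_neg hiS] at hqi
          exact lt_irrefl 0 hqi
        have := Finset.card_le_card hsub
        rw [hS, Fin.card_Iio, hv1] at this
        exact this
      have hpcard : supC d 0 p = n - 1 := by
        have hfe : (Finset.univ.filter fun i => 0 ≤ d i ∧ 0 < p i)
            = Finset.univ.erase i0 := by
          ext i
          simp only [Finset.mem_filter, Finset.mem_univ, true_and, Finset.mem_erase,
            and_true]
          constructor
          · rintro ⟨-, hpi⟩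
            intro h
            rw [hp] at hpi
            dsimp only at hpi
            rw [if_pos h] at hpi
            exact lt_irrefl 0 hpi
          · intro h
            refine ⟨(hpos i).le, ?_⟩
            rw [hp]
            dsimp only
            rw [if_neg h]
            positivity
        rw [supC, hfe, Finset.card_erase_of_mem (Finset.mem_univ i0),
          Finset.card_univ, Fintype.card_fin]
      rw [hpcard]
      omega
  · -- Case B : use threshold t = d i0
    push_neg at hcase
    obtain ⟨S, hS⟩ : ∃ S : Finset (Fin n), S = {i1, i2} := ⟨_, rfl⟩
    obtain ⟨DS, hDS⟩ : ∃ DS : ℝ, DS = d i1 + d i2 := ⟨_, rfl⟩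
    have hDSpos : 0 < DS := by rw [hDS]; linarith [hpos i1, hpos i2]
    obtain ⟨p, hp⟩ : ∃ p : Fin n → ℝ, p = fun i => if i = i0 then 1 else 0 := ⟨_, rfl⟩
    obtain ⟨q, hq⟩ : ∃ q : Fin n → ℝ, q = fun i => if i ∈ S then d i / DS else 0 :=
      ⟨_, rfl⟩
    have hp0 : ∀ i, 0 ≤ p i := by
      intro i
      rw [hp]
      dsimp only
      split_ifs
      · norm_num
      · exact le_rfl
    have hps : ∑ i, p i = 1 := by
      rw [hp]
      rw [Finset.sum_ite_eq' Finset.univ i0 (fun _ => (1:ℝ))]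
      simp
    have hq0 : ∀ i, 0 ≤ q i := by
      intro i
      rw [hq]
      dsimp only
      split_ifs
      · exact div_nonneg (hpos i).le hDSpos.le
      · exact le_rfl
    have hqs : ∑ i, q i = 1 := by
      rw [hq]
      rw [Finset.sum_ite_mem, Finset.univ_inter, hS, Finset.sum_pair hne12,
        ← add_div, ← hDS, div_self hDSpos.ne']
    refine ⟨p, q, hp0, hps, hq0, hqs, ?_, ?_⟩
    · apply construct d hpos hsum {i0} p q
      · intro l hl
        rw [hp]
        dsimp only
        rw [if_neg]
        simpa using hl
      · exact hps
      · exact hq0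
      · exact hqs
      · rw [Finset.sum_singleton]
        exact hd0lt1
      · intro i
        rw [Finset.sum_singleton, hq]
        dsimp only
        split_ifs with hiS
        · calc d i0 * (d i / DS) ≤ DS * (d i / DS) := by
                apply mul_le_mul_of_nonneg_right _ (div_nonneg (hpos i).le hDSpos.le)
                linarith
            _ = d i := by field_simp
        · rw [mul_zero]; exact (hpos i).le
    · apply noETO d hpos hmono p q hp0 (d i0)
      have hqcard : supC d (d i0) q = 0 := by
        rw [supC, Finset.card_eq_zero]
        rw [Finset.eq_empty_iff_forall_notMem]
        intro i hi
        obtain ⟨hdi, hqi⟩ := (Finset.mem_filter.mp hi).2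
        have hiS : i ∈ S := by
          by_contra hiS
          rw [hq] at hqi
          dsimp only at hqi
          rw [if_neg hiS] at hqi
          exact lt_irrefl 0 hqi
        have hdile : d i ≤ d i1 := by
          rw [hS] at hiS
          rcases Finset.mem_insert.mp hiS with h | h
          · rw [h]
          · rw [Finset.mem_singleton.mp h]
            exact hmono i1 i2 (by rw [Fin.le_def, hv1, hv2]; omega)
        linarith
      have hpcard : 0 < supC d (d i0) p := by
        rw [supC, Finset.card_pos]
        refine ⟨i0, Finset.mem_filter.mpr ⟨Finset.mem_univ _, le_refl _, ?_⟩⟩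
        rw [hp]
        dsimp only
        rw [if_pos rfl]
        norm_num
      omega
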